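/- arXiv:math/0605011 — 2 statements merged into one kernel-verified Lean document; each statement's English description precedes it below -/
import Mathlib

section
/- Let K be a finite extension of ℚ_p and let N/K be a fully ramified cyclic extension of degree p with unique ramification break b satisfying p ∤ b. Then every ρ ∈ N with v_N(ρ) ≡ b (mod p) generates a normal basis of N over K. -/
/-- An additive, normalized discrete valuation on a field `F`, recorded as a function
`v : F → ℤ` (the value at `0` is irrelevant): `v` is additive on products of nonzero
elements, satisfies the ultrametric inequality on nonzero elements, and is surjective
onto `ℤ` (this is the normalization `v(π) = 1` for a uniformizer `π`). -/
structure IsNormDiscreteVal {F : Type*} [Field F] (v : F → ℤ) : Prop where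
  map_mul : ∀ ⦃x y : F⦄, x ≠ 0 → y ≠ 0 → v (x * y) = v x + v y
  min_le_add : ∀ ⦃x y : F⦄, x ≠ 0 → y ≠ 0 → x + y ≠ 0 → min (v x) (v y) ≤ v (x + y)
  surj : ∀ k : ℤ, ∃ x : F, x ≠ 0 ∧ v x = k

namespace IsNormDiscreteVal

variable {F : Type*} [Field F] {v : F → ℤ} (hv : IsNormDiscreteVal v)

lemma val_one (hv : IsNormDiscreteVal v) : v 1 = 0 := by
  have h := hv.map_mul (one_ne_zero (α := F)) one_ne_zero
  rw [one_mul] at h; omega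

lemma val_neg (hv : IsNormDiscreteVal v) {x : F} (hx : x ≠ 0) : v (-x) = v x := by
  have hm : v ((-1 : F) * (-1)) = v (-1) + v (-1) :=
    hv.map_mul (by norm_num) (by norm_num)
  rw [show ((-1 : F) * (-1)) = 1 by ring, hv.val_one] at hm
  have h := hv.map_mul (show (-1 : F) ≠ 0 by norm_num) hx
  rw [show ((-1 : F) * x) = -x by ring] at h
  omega

lemma val_pow (hv : IsNormDiscreteVal v) {x : F} (hx : x ≠ 0) (n : ℕ) :
    v (x ^ n) = n * v x := by
  induction n with
  | zero => simpa using hv.val_one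
  | succ n ih =>
    rw [pow_succ, hv.map_mul (pow_ne_zero _ hx) hx, ih]; push_cast; ring

lemma val_add_left (hv : IsNormDiscreteVal v) {x y : F} (hx : x ≠ 0) (hy : y ≠ 0)
    (hlt : v x < v y) : x + y ≠ 0 ∧ v (x + y) = v x := by
  have hne : x + y ≠ 0 := by
    intro h
    have hxy : x = -y := eq_neg_of_add_eq_zero_left h
    rw [hxy, hv.val_neg hy] at hlt; omega
  refine ⟨hne, ?_⟩
  have h1 : min (v x) (v y) ≤ v (x + y) := hv.min_le_add hx hy hne
  rw [min_eq_left hlt.le] at h1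
  rcases eq_or_lt_of_le h1 with h2 | h2
  · omega
  · exfalso
    have hx' : x = (x + y) + (-y) := by ring
    have h3 : min (v (x + y)) (v (-y)) ≤ v ((x + y) + (-y)) :=
      hv.min_le_add hne (neg_ne_zero.mpr hy) (by rw [← hx']; exact hx)
    rw [← hx', hv.val_neg hy] at h3
    omega

lemma val_add_eq_min (hv : IsNormDiscreteVal v) {x y : F} (hx : x ≠ 0) (hy : y ≠ 0)
    (hne : v x ≠ v y) : x + y ≠ 0 ∧ v (x + y) = min (v x) (v y) := by
  rcases lt_or_gt_of_ne hne with h | h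
  · rw [min_eq_left h.le]; exact hv.val_add_left hx hy h
  · rw [min_eq_right h.le, add_comm]; exact hv.val_add_left hy hx h

lemma val_sum (hv : IsNormDiscreteVal v) {ι : Type*} {s : Finset ι} (hs : s.Nonempty)
    {g : ι → F} (h0 : ∀ i ∈ s, g i ≠ 0)
    (hd : ∀ i ∈ s, ∀ j ∈ s, v (g i) = v (g j) → i = j) :
    (∑ i ∈ s, g i) ≠ 0 ∧
      ∃ i₀ ∈ s, v (∑ i ∈ s, g i) = v (g i₀) ∧ ∀ i ∈ s, v (g i₀) ≤ v (g i) := by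
  induction hs using Finset.Nonempty.cons_induction with
  | singleton a =>
    refine ⟨by simpa using h0 a (by simp), a, by simp, by simp, by simp⟩
  | cons a s ha hs ih =>
    have h0' : ∀ i ∈ s, g i ≠ 0 := fun i hi => h0 i (Finset.mem_cons_of_mem hi)
    have hd' : ∀ i ∈ s, ∀ j ∈ s, v (g i) = v (g j) → i = j := fun i hi j hj =>
      hd i (Finset.mem_cons_of_mem hi) j (Finset.mem_cons_of_mem hj)
    obtain ⟨hsne, i₀, hi₀, hv₀, hmin⟩ := ih h0' hd'
    have hga : g a ≠ 0 := h0 a (Finset.mem_cons_self a s)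
    have hvne : v (g a) ≠ v (∑ i ∈ s, g i) := by
      rw [hv₀]
      intro h
      exact ha (hd a (Finset.mem_cons_self a s) i₀ (Finset.mem_cons_of_mem hi₀) h ▸ hi₀)
    obtain ⟨hne2, hv2⟩ := hv.val_add_eq_min hga hsne hvne
    rw [Finset.sum_cons]
    refine ⟨hne2, ?_⟩
    rcases le_or_gt (v (g a)) (v (g i₀)) with hle | hlt
    · refine ⟨a, Finset.mem_cons_self a s, ?_, ?_⟩
      · rw [hv2, hv₀, min_eq_left hle]
      · intro i hi
        rcases Finset.mem_cons.mp hi with rfl | hi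
        · exact le_refl _
        · exact le_trans hle (hmin i hi)
    · refine ⟨i₀, Finset.mem_cons_of_mem hi₀, ?_, ?_⟩
      · rw [hv2, hv₀, min_eq_right hlt.le]
      · intro i hi
        rcases Finset.mem_cons.mp hi with rfl | hi
        · exact hlt.le
        · exact hmin i hi

lemma val_prod (hv : IsNormDiscreteVal v) {ι : Type*} {s : Finset ι}
    {g : ι → F} (h0 : ∀ i ∈ s, g i ≠ 0) :
    (∏ i ∈ s, g i) ≠ 0 ∧ v (∏ i ∈ s, g i) = ∑ i ∈ s, v (g i) := by
  induction s using Finset.cons_induction with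
  | empty => simpa using hv.val_one
  | cons a s ha ih =>
    obtain ⟨h1, h2⟩ := ih (fun i hi => h0 i (Finset.mem_cons_of_mem hi))
    have hga : g a ≠ 0 := h0 a (Finset.mem_cons_self a s)
    rw [Finset.prod_cons, Finset.sum_cons]
    exact ⟨mul_ne_zero hga h1, by rw [hv.map_mul hga h1, h2]⟩

end IsNormDiscreteVal

open Polynomial in
lemma val_natCast_eq_zero {p : ℕ} [Fact p.Prime] {K N : Type*} [Field K] [Field N]
    [Algebra ℚ_[p] K] [Algebra K N]
    {vN : N → ℤ} (hvN : IsNormDiscreteVal vN) {n : ℕ} (hn : ¬ p ∣ n) :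
    vN (n : N) = 0 := by
  have hp : p.Prime := Fact.out
  set ψ : ℤ_[p] →+* N :=
    ((algebraMap K N).comp (algebraMap ℚ_[p] K)).comp (PadicInt.Coe.ringHom) with hψ
  have hψinj : Function.Injective ψ := by
    rw [hψ, RingHom.coe_comp, RingHom.coe_comp]
    exact ((algebraMap K N).injective.comp (algebraMap ℚ_[p] K).injective).comp
      Subtype.coe_injective
  have hn0 : n ≠ 0 := fun h => hn (h ▸ dvd_zero p)
  have hncast : ((n : ℤ_[p])) ≠ 0 := Nat.cast_ne_zero.mpr hn0
  set u : ℤ_[p] := (n : ℤ_[p]) ^ (p - 1) with hu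
  have hu0 : u ≠ 0 := pow_ne_zero _ hncast
  set m : ℤ := vN (ψ u) with hm
  have hqdvd : ∀ q : ℕ, q.Prime → q ≠ p → (q : ℤ) ∣ m := by
    intro q hq hqp
    -- Hensel's lemma for X^q - C u at a = 1
    have hnormq : ‖((q : ℤ) : ℤ_[p])‖ = 1 := by
      refine le_antisymm (PadicInt.norm_le_one _) ?_
      rcases lt_or_ge ‖((q : ℤ) : ℤ_[p])‖ 1 with h | h
      · exfalso
        have := (PadicInt.norm_int_lt_one_iff_dvd (q : ℤ)).mp h
        have : (p : ℤ) ∣ (q : ℤ) := this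
        have hpq : p ∣ q := by exact_mod_cast this
        exact hqp ((Nat.prime_dvd_prime_iff_eq hp hq).mp hpq).symm
      · exact h
    have hfermat : (p : ℤ) ∣ (1 - (n : ℤ) ^ (p - 1)) := by
      have h1 : ((n : ZMod p)) ≠ 0 := by
        rw [Ne, ZMod.natCast_eq_zero_iff]; exact hn
      have h2 : ((n : ZMod p)) ^ (p - 1) = 1 := ZMod.pow_card_sub_one_eq_one h1
      have : (((1 - (n : ℤ) ^ (p - 1)) : ℤ) : ZMod p) = 0 := by push_cast [h2]; ring
      exact (ZMod.intCast_zmod_eq_zero_iff_dvd _ p).mp this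
    set F : Polynomial ℤ_[p] := X ^ q - C u with hF
    have hev : F.eval 1 = 1 - u := by simp [hF]
    have hdev : F.derivative.eval 1 = (q : ℤ_[p]) := by
      simp [hF, derivative_X_pow]
    have hcond : ‖F.eval 1‖ < ‖F.derivative.eval 1‖ ^ 2 := by
      rw [hev, hdev]
      have : ‖(q : ℤ_[p])‖ = 1 := by
        have : ((q : ℤ) : ℤ_[p]) = (q : ℤ_[p]) := by push_cast; ring
        rw [← this]; exact hnormq
      rw [this, one_pow]
      have h1u : (1 - u : ℤ_[p]) = (((1 - (n : ℤ) ^ (p - 1)) : ℤ) : ℤ_[p]) := by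
        push_cast [hu]; ring
      rw [h1u]
      exact (PadicInt.norm_int_lt_one_iff_dvd _).mpr hfermat
    obtain ⟨z, hz, -⟩ := hensels_lemma hcond
    have hzq : z ^ q = u := by
      have h : z ^ q - u = 0 := by simpa [hF] using hz
      exact sub_eq_zero.mp h
    have hz0 : z ≠ 0 := by
      intro h
      rw [h, zero_pow hq.ne_zero] at hzq
      exact hu0 hzq.symm
    have hψz : ψ z ≠ 0 := fun h => hz0 (hψinj (by rwa [map_zero]))
    have : vN (ψ z ^ q) = m := by rw [← map_pow, hzq]
    rw [hvN.val_pow hψz q] at this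
    exact ⟨vN (ψ z), this.symm⟩
  have hm0 : m = 0 := by
    obtain ⟨q, hq1, hq2⟩ := Nat.exists_infinite_primes (max p m.natAbs + 1)
    have hdvd := hqdvd q hq2 (by omega)
    by_contra hne
    have h1 : (q : ℤ) ≤ |m| := Int.le_of_dvd (abs_pos.mpr hne) ((dvd_abs _ _).mpr hdvd)
    rw [Int.abs_eq_natAbs] at h1
    have : q ≤ m.natAbs := by exact_mod_cast h1
    omega
  -- m = (p-1) * vN (n : N)
  have hψu : ψ u = (n : N) ^ (p - 1) := by
    rw [hu, map_pow, map_natCast]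
  have hnN : (n : N) ≠ 0 := by
    have : ψ (n : ℤ_[p]) = (n : N) := map_natCast ψ n
    rw [← this]
    exact fun h => hncast (hψinj (by rwa [map_zero]))
  have := hvN.val_pow hnN (p - 1)
  rw [← hψu, ← hm, hm0] at this
  have hp1 : ((p - 1 : ℕ) : ℤ) ≠ 0 := by
    have := hp.two_le; omega
  exact (mul_eq_zero.mp this.symm).resolve_left hp1

/-- The `i`-th ramification group (lower numbering) of `N/K`, as a set of `K`-algebra
automorphisms of `N`:  `G_i = {σ : v_N(σ π_N − π_N) ≥ i + 1}`, where `π_N` is a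
uniformizer of `N`; the case `σ π_N = π_N` corresponds to the convention `v_N(0) = ∞`. -/
def ramSet (K N : Type*) [Field K] [Field N] [Algebra K N]
    (vN : N → ℤ) (πN : N) (i : ℤ) : Set (N ≃ₐ[K] N) :=
  {σ | σ πN = πN ∨ i + 1 ≤ vN (σ πN - πN)}

/-- `ρ` generates a normal basis of `N` over `K`: the conjugates `σ ρ` for
`σ ∈ Gal(N/K)` form a `K`-vector space basis of `N`. -/
def IsNormalBasisGenerator (K N : Type*) [Field K] [Field N] [Algebra K N] (ρ : N) : Prop :=
  ∃ b : Module.Basis (N ≃ₐ[K] N) K N, ∀ σ : N ≃ₐ[K] N, b σ = σ ρ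

/-- **Degree-`p` case of Theorem 1.** Let `N/K` be a fully ramified cyclic extension of
degree `p` with unique ramification break `b`, where `p ∤ b`.  Then every `ρ ∈ N` with
`v_N(ρ) ≡ b (mod p)` generates a normal basis of `N` over `K`. -/
theorem normal_basis_of_degree_p
    (p : ℕ) [Fact p.Prime]
    (K N : Type*) [Field K] [Field N]
    [Algebra ℚ_[p] K] [FiniteDimensional ℚ_[p] K]
    [Algebra K N] [IsGalois K N]
    -- `N/K` is (cyclic) of degree `p`
    (hdeg : Module.finrank K N = p)
    (vK : K → ℤ) (hvK : IsNormDiscreteVal vK)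
    (vN : N → ℤ) (hvN : IsNormDiscreteVal vN)
    -- `N/K` is fully ramified
    (hfull : ∀ x : K, x ≠ 0 → vN (algebraMap K N x) = (p : ℤ) * vK x)
    (πN : N) (hπN0 : πN ≠ 0) (hπN1 : vN πN = 1)
    -- `b` is the unique ramification break, and `p ∤ b`
    (b : ℤ)
    (hb : ∀ i : ℤ, ramSet K N vN πN (i + 1) ⊂ ramSet K N vN πN i ↔ i = b)
    (hpb : ¬ (p : ℤ) ∣ b)
    (ρ : N) (hρ0 : ρ ≠ 0)
    (hρ : vN ρ ≡ b [ZMOD (p : ℤ)]) :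
    IsNormalBasisGenerator K N ρ := by
  classical
  have hp : p.Prime := Fact.out
  have hp2 : 2 ≤ p := hp.two_le
  have hpZ : Prime (p : ℤ) := Nat.prime_iff_prime_int.mp hp
  have hFD : FiniteDimensional K N :=
    FiniteDimensional.of_finrank_pos (by rw [hdeg]; omega)
  -- Fin p congruence helper
  have hfin : ∀ k k' : Fin p, (p : ℤ) ∣ ((k : ℤ) - (k' : ℤ)) → k = k' := by
    intro k k' hdvd
    have hk := k.isLt
    have hk' := k'.isLt
    have habs : |((k : ℤ) - (k' : ℤ))| < (p : ℤ) := by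
      rw [abs_lt]; constructor <;> [push_cast; push_cast] <;> omega
    have := Int.eq_zero_of_abs_lt_dvd hdvd habs
    have : (k : ℤ) = (k' : ℤ) := by omega
    exact Fin.ext (by exact_mod_cast this)
  -- algebraMap nonvanishing and valuation of smul
  have hamap : ∀ c : K, c ≠ 0 → (algebraMap K N) c ≠ 0 := fun c hc =>
    fun h => hc ((algebraMap K N).injective (by rw [h, map_zero]))
  have hsmul : ∀ c : K, c ≠ 0 → ∀ y : N, y ≠ 0 →
      (c • y ≠ 0 ∧ vN (c • y) = (p : ℤ) * vK c + vN y) := by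
    intro c hc y hy
    rw [Algebra.smul_def]
    exact ⟨mul_ne_zero (hamap c hc) hy,
      by rw [hvN.map_mul (hamap c hc) hy, hfull c hc]⟩
  have hπpow : ∀ k : ℕ, πN ^ k ≠ 0 ∧ vN (πN ^ k) = k := fun k =>
    ⟨pow_ne_zero _ hπN0, by rw [hvN.val_pow hπN0, hπN1, mul_one]⟩
  -- linear independence of powers of πN
  have hliπ : LinearIndependent K (fun k : Fin p => πN ^ (k : ℕ)) := by
    rw [Fintype.linearIndependent_iff]
    intro a ha
    by_contra hcon
    push_neg at hcon
    obtain ⟨j, hj⟩ := hcon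
    set s : Finset (Fin p) := Finset.univ.filter (fun k => a k ≠ 0) with hs
    have hjs : j ∈ s := by simp [hs, hj]
    have hsum : ∑ k ∈ s, a k • πN ^ (k : ℕ) = 0 := by
      rw [← ha]
      refine Finset.sum_filter_of_ne ?_
      intro k _ hk
      intro h; exact hk (by rw [h, zero_smul])
    have h0 : ∀ k ∈ s, a k • πN ^ (k : ℕ) ≠ 0 := by
      intro k hk
      have hak : a k ≠ 0 := (Finset.mem_filter.mp hk).2
      exact (hsmul (a k) hak _ (hπpow (k : ℕ)).1).1
    have hd : ∀ k ∈ s, ∀ k' ∈ s, vN (a k • πN ^ (k : ℕ)) = vN (a k' • πN ^ (k' : ℕ)) → k = k' := by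
      intro k hk k' hk' hvv
      have hak : a k ≠ 0 := (Finset.mem_filter.mp hk).2
      have hak' : a k' ≠ 0 := (Finset.mem_filter.mp hk').2
      rw [(hsmul (a k) hak _ (hπpow (k : ℕ)).1).2, (hπpow (k : ℕ)).2,
        (hsmul (a k') hak' _ (hπpow (k' : ℕ)).1).2, (hπpow (k' : ℕ)).2] at hvv
      exact hfin k k' ⟨vK (a k') - vK (a k), by linarith⟩
    obtain ⟨hne, -⟩ := hvN.val_sum ⟨j, hjs⟩ h0 hd
    exact hne hsum
  have hcardfin : Fintype.card (Fin p) = Module.finrank K N := by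
    rw [Fintype.card_fin, hdeg]
  set β : Module.Basis (Fin p) K N := basisOfLinearIndependentOfCardEqFinrank hliπ hcardfin with hβ
  have hβcoe : ∀ k : Fin p, β k = πN ^ (k : ℕ) := by
    intro k
    rw [hβ, coe_basisOfLinearIndependentOfCardEqFinrank]
  -- extract σ₀ with break exactly b
  obtain ⟨σ₀, hσ₀b, hσ₀nb⟩ := Set.exists_of_ssubset ((hb b).mpr rfl)
  simp only [ramSet, Set.mem_setOf_eq, not_or, not_le] at hσ₀b hσ₀nb
  obtain ⟨hσ₀π, hσ₀lt⟩ := hσ₀nb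
  have hε : vN (σ₀ πN - πN) = b + 1 := by
    have h1 : b + 1 ≤ vN (σ₀ πN - πN) := hσ₀b.resolve_left hσ₀π
    omega
  have hεne : σ₀ πN - πN ≠ 0 := sub_ne_zero.mpr hσ₀π
  -- every non-fixing automorphism has break exactly b
  have hE : ∀ τ : N ≃ₐ[K] N, τ πN ≠ πN → vN (τ πN - πN) = b + 1 := by
    intro τ hτ
    set m := vN (τ πN - πN) with hm
    have hss : ramSet K N vN πN ((m - 1) + 1) ⊂ ramSet K N vN πN (m - 1) := by
      constructor
      · intro σ hσ
        rcases hσ with h | h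
        · exact Or.inl h
        · exact Or.inr (by omega)
      · intro hsub
        have h1 : τ ∈ ramSet K N vN πN (m - 1) := Or.inr (by omega)
        have h2 := hsub h1
        rcases h2 with h | h
        · exact hτ h
        · omega
    have := (hb (m - 1)).mp hss
    omega
  -- τ πN is never zero
  have hτπ0 : ∀ τ : N ≃ₐ[K] N, τ πN ≠ 0 := by
    intro τ h
    exact hπN0 (τ.injective (by rw [h, map_zero]))
  -- b ≥ 1
  have hb1 : 1 ≤ b := by
    by_contra hble
    push_neg at hble
    have hbne : b ≠ 0 := fun h => hpb (h ▸ dvd_zero _)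
    have hbneg : b + 1 ≤ 0 := by omega
    -- valuation of τ πN for non-fixing τ
    have hτval : ∀ τ : N ≃ₐ[K] N, τ πN ≠ πN → vN (τ πN) = b + 1 := by
      intro τ hτ
      have hδ : vN (τ πN - πN) = b + 1 := hE τ hτ
      have hδne : τ πN - πN ≠ 0 := sub_ne_zero.mpr hτ
      have := (hvN.val_add_eq_min hπN0 hδne (by rw [hπN1, hδ]; omega)).2
      rw [show πN + (τ πN - πN) = τ πN by ring] at this
      rw [this, hπN1, hδ, min_eq_right (by omega)]
    -- the product over the Galois group is in K
    have hP := Algebra.norm_eq_prod_automorphisms (K := K) πN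
    obtain ⟨hPne, hPval⟩ := hvN.val_prod (s := Finset.univ)
      (g := fun τ : N ≃ₐ[K] N => τ πN) (fun τ _ => hτπ0 τ)
    have hnorm0 : (Algebra.norm K) πN ≠ 0 := by
      intro h
      rw [h, map_zero] at hP
      exact hPne hP.symm
    have hdvdP : (p : ℤ) ∣ vN (∏ τ : N ≃ₐ[K] N, τ πN) := by
      rw [← hP, hfull _ hnorm0]
      exact Dvd.intro _ rfl
    rw [hPval] at hdvdP
    -- split the sum
    set Pfix : Finset (N ≃ₐ[K] N) := Finset.univ.filter (fun τ => τ πN = πN) with hPfix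
    set t := Pfix.card with ht
    set u' := (Finset.univ.filter (fun τ : N ≃ₐ[K] N => ¬ τ πN = πN)).card with hu'
    have hcardG : Fintype.card (N ≃ₐ[K] N) = p := by
      rw [← Nat.card_eq_fintype_card, IsGalois.card_aut_eq_finrank, hdeg]
    have htu : t + u' = p := by
      rw [ht, hu', Finset.card_filter_add_card_filter_not, Finset.card_univ, hcardG]
    have hsplit : ∑ τ : N ≃ₐ[K] N, vN (τ πN) = (t : ℤ) + (u' : ℤ) * (b + 1) := by
      rw [← Finset.sum_filter_add_sum_filter_not Finset.univ (fun τ => τ πN = πN)]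
      congr 1
      · rw [Finset.sum_congr rfl (fun τ hτ => by
          rw [(Finset.mem_filter.mp hτ).2, hπN1]), Finset.sum_const, nsmul_eq_mul, mul_one]
      · rw [Finset.sum_congr rfl (fun τ hτ => hτval τ (Finset.mem_filter.mp hτ).2),
          Finset.sum_const, nsmul_eq_mul]
    rw [hsplit] at hdvdP
    -- derive p ∣ u' * b
    have hub : (p : ℤ) ∣ (u' : ℤ) * b := by
      have h1 : (t : ℤ) + (u' : ℤ) * (b + 1) = (u' : ℤ) * b + ((t : ℤ) + (u' : ℤ)) := by ring
      have h2 : (t : ℤ) + (u' : ℤ) = (p : ℤ) := by exact_mod_cast htu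
      rw [h1, h2] at hdvdP
      simpa using dvd_sub hdvdP (dvd_refl (p : ℤ))
    have hpu : (p : ℤ) ∣ (u' : ℤ) := (hpZ.dvd_mul.mp hub).resolve_right hpb
    have hpu' : p ∣ u' := by exact_mod_cast hpu
    -- t ≥ 1 since the identity fixes πN
    have h1fix : (1 : N ≃ₐ[K] N) ∈ Pfix := by
      simp [hPfix]
    have ht1 : 1 ≤ t := Finset.card_pos.mpr ⟨1, h1fix⟩
    have hu'lt : u' < p := by omega
    have hu'0 : u' = 0 := Nat.eq_zero_of_dvd_of_lt hpu' hu'lt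
    have hempty : (Finset.univ.filter (fun τ : N ≃ₐ[K] N => ¬ τ πN = πN)) = ∅ :=
      Finset.card_eq_zero.mp hu'0
    have : σ₀ ∈ (Finset.univ.filter (fun τ : N ≃ₐ[K] N => ¬ τ πN = πN)) := by
      simp [hσ₀π]
    rw [hempty] at this
    exact absurd this (Finset.notMem_empty σ₀)
  -- valuations of natural numbers prime to p vanish
  have hU : ∀ n : ℕ, ¬ p ∣ n → vN (n : N) = 0 := fun n hn =>
    val_natCast_eq_zero (K := K) hvN hn
  have hCharZero : CharZero N := by
    have h1 : CharZero K :=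
      charZero_of_injective_algebraMap (algebraMap ℚ_[p] K).injective
    exact charZero_of_injective_algebraMap (algebraMap K N).injective
  -- choose coefficients are prime to p
  have hchoose : ∀ n i : ℕ, i ≤ n → n < p → ¬ p ∣ n.choose i := by
    intro n i hin hnp hdvd
    have h1 : n.choose i * i.factorial * (n - i).factorial = n.factorial :=
      Nat.choose_mul_factorial_mul_factorial hin
    have h2 : p ∣ n.factorial := h1 ▸ Dvd.dvd.mul_right (Dvd.dvd.mul_right hdvd _) _
    have h3 : p ≤ n := (Nat.Prime.dvd_factorial hp).mp h2
    omega
  -- B1 : the valuation of σ₀ (πN ^ n) - πN ^ n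
  have hB1 : ∀ n : ℕ, 1 ≤ n → n < p →
      (σ₀ (πN ^ n) - πN ^ n ≠ 0 ∧ vN (σ₀ (πN ^ n) - πN ^ n) = (n : ℤ) + b) := by
    intro n h1 h2
    have hexp : σ₀ (πN ^ n) - πN ^ n
        = ∑ i ∈ Finset.range n, πN ^ i * (σ₀ πN - πN) ^ (n - i) * (n.choose i : N) := by
      rw [map_pow, show σ₀ πN = πN + (σ₀ πN - πN) by ring, add_pow,
        Finset.sum_range_succ]
      simp
    set g : ℕ → N := fun i => πN ^ i * (σ₀ πN - πN) ^ (n - i) * (n.choose i : N) with hg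
    have hg0 : ∀ i ∈ Finset.range n, g i ≠ 0 := by
      intro i hi
      have hilt : i < n := Finset.mem_range.mp hi
      refine mul_ne_zero (mul_ne_zero (pow_ne_zero _ hπN0) (pow_ne_zero _ hεne)) ?_
      exact Nat.cast_ne_zero.mpr (Nat.choose_pos hilt.le).ne'
    have hgv : ∀ i ∈ Finset.range n, vN (g i) = (n : ℤ) + ((n : ℤ) - i) * b := by
      intro i hi
      have hilt : i < n := Finset.mem_range.mp hi
      rw [hg]
      rw [hvN.map_mul (mul_ne_zero (pow_ne_zero _ hπN0) (pow_ne_zero _ hεne))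
        (Nat.cast_ne_zero.mpr (Nat.choose_pos hilt.le).ne'),
        hvN.map_mul (pow_ne_zero _ hπN0) (pow_ne_zero _ hεne),
        (hπpow i).2, hvN.val_pow hεne, hε, hU _ (hchoose n i hilt.le h2)]
      have : ((n - i : ℕ) : ℤ) = (n : ℤ) - i := by
        rw [Nat.cast_sub hilt.le]
      rw [this]; ring
    obtain ⟨hsne, i₀, hi₀, hvi₀, hmin⟩ := hvN.val_sum ⟨0, Finset.mem_range.mpr h1⟩ hg0 (by
      intro i hi j hj hvv
      rw [hgv i hi, hgv j hj] at hvv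
      have hbne : b ≠ 0 := fun h => hpb (h ▸ dvd_zero _)
      have : ((n : ℤ) - i) * b = ((n : ℤ) - j) * b := by omega
      have := mul_right_cancel₀ hbne this
      have hi' := Finset.mem_range.mp hi
      have hj' := Finset.mem_range.mp hj
      omega)
    rw [← hexp] at hsne hvi₀
    refine ⟨hsne, ?_⟩
    rw [hvi₀, hgv i₀ hi₀]
    have hi₀lt : i₀ < n := Finset.mem_range.mp hi₀
    have hle : (n : ℤ) + b ≤ (n : ℤ) + ((n : ℤ) - i₀) * b := by
      have h3 : (1 : ℤ) ≤ (n : ℤ) - i₀ := by omega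
      nlinarith
    have hge : (n : ℤ) + ((n : ℤ) - i₀) * b ≤ (n : ℤ) + b := by
      have hmem : (n - 1) ∈ Finset.range n := Finset.mem_range.mpr (by omega)
      have h4 := hmin (n - 1) hmem
      rw [hgv i₀ hi₀, hgv (n - 1) hmem] at h4
      have h5 : ((n - 1 : ℕ) : ℤ) = (n : ℤ) - 1 := by
        have : 1 ≤ n := h1
        push_cast [this]
        ring
      rw [h5, show ((n : ℤ) - ((n : ℤ) - 1)) = 1 by ring, one_mul] at h4
      exact h4
    omega
  -- Key Lemma: σ₀ - 1 raises valuations by exactly b off the "divisible" part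
  have hKL : ∀ x : N, x ≠ 0 → ¬ (p : ℤ) ∣ vN x →
      (σ₀ x - x ≠ 0 ∧ vN (σ₀ x - x) = vN x + b) := by
    intro x hx hpx
    set c : Fin p → K := fun k => β.repr x k with hc
    have hxsum : ∑ k : Fin p, c k • πN ^ (k : ℕ) = x := by
      have h := β.sum_repr x
      rw [← h]
      exact Finset.sum_congr rfl (fun k _ => by rw [hβcoe k])
    set s : Finset (Fin p) := Finset.univ.filter (fun k => c k ≠ 0) with hs
    have hxs : ∑ k ∈ s, c k • πN ^ (k : ℕ) = x := by
      rw [← hxsum]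
      exact Finset.sum_filter_of_ne (fun k _ hk h => hk (by rw [h, zero_smul]))
    have hsne : s.Nonempty := by
      by_contra h
      rw [Finset.not_nonempty_iff_eq_empty] at h
      rw [h, Finset.sum_empty] at hxs
      exact hx hxs.symm
    have hgv : ∀ k ∈ s, (c k • πN ^ (k : ℕ) ≠ 0 ∧
        vN (c k • πN ^ (k : ℕ)) = (p : ℤ) * vK (c k) + ((k : ℕ) : ℤ)) := by
      intro k hk
      have hck : c k ≠ 0 := (Finset.mem_filter.mp hk).2
      obtain ⟨h1, h2⟩ := hsmul (c k) hck _ (hπpow (k : ℕ)).1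
      exact ⟨h1, by rw [h2, (hπpow (k : ℕ)).2]⟩
    have hdst : ∀ k ∈ s, ∀ k' ∈ s,
        vN (c k • πN ^ (k : ℕ)) = vN (c k' • πN ^ (k' : ℕ)) → k = k' := by
      intro k hk k' hk' hvv
      rw [(hgv k hk).2, (hgv k' hk').2] at hvv
      exact hfin k k' ⟨vK (c k') - vK (c k), by linarith⟩
    obtain ⟨hx0', k₀, hk₀, hvk₀, hmin₀⟩ :=
      hvN.val_sum hsne (fun k hk => (hgv k hk).1) hdst
    rw [hxs] at hvk₀
    have hk₀ne : (k₀ : ℕ) ≠ 0 := by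
      intro h
      apply hpx
      rw [hvk₀, (hgv k₀ hk₀).2]
      have h0 : ((k₀ : ℕ) : ℤ) = 0 := by exact_mod_cast h
      rw [h0]
      exact ⟨vK (c k₀), by ring⟩
    have hmap : σ₀ x - x = ∑ k ∈ s, c k • (σ₀ (πN ^ (k : ℕ)) - πN ^ (k : ℕ)) := by
      have h1 : σ₀ x = ∑ k ∈ s, c k • σ₀ (πN ^ (k : ℕ)) := by
        rw [← hxs, map_sum]
        exact Finset.sum_congr rfl (fun k _ => by rw [Algebra.smul_def, Algebra.smul_def, map_mul, AlgEquiv.commutes])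
      rw [h1]
      conv_lhs => rw [← hxs]
      rw [← Finset.sum_sub_distrib]
      exact Finset.sum_congr rfl (fun k _ => (smul_sub (c k) _ _).symm)
    set s' : Finset (Fin p) := s.filter (fun k => (k : ℕ) ≠ 0) with hs'
    have hmap' : σ₀ x - x = ∑ k ∈ s', c k • (σ₀ (πN ^ (k : ℕ)) - πN ^ (k : ℕ)) := by
      rw [hmap]
      symm
      refine Finset.sum_filter_of_ne ?_
      intro k _ hfne hk0
      exact hfne (by rw [hk0]; simp)
    have hk₀s' : k₀ ∈ s' := Finset.mem_filter.mpr ⟨hk₀, hk₀ne⟩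
    have hgv' : ∀ k ∈ s', (c k • (σ₀ (πN ^ (k : ℕ)) - πN ^ (k : ℕ)) ≠ 0 ∧
        vN (c k • (σ₀ (πN ^ (k : ℕ)) - πN ^ (k : ℕ)))
          = (p : ℤ) * vK (c k) + ((k : ℕ) : ℤ) + b) := by
      intro k hk
      obtain ⟨hks, hk0⟩ := Finset.mem_filter.mp hk
      have hck : c k ≠ 0 := (Finset.mem_filter.mp hks).2
      obtain ⟨hB1a, hB1b⟩ := hB1 (k : ℕ) (Nat.one_le_iff_ne_zero.mpr hk0) k.isLt
      obtain ⟨h1, h2⟩ := hsmul (c k) hck _ hB1a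
      exact ⟨h1, by rw [h2, hB1b]; ring⟩
    obtain ⟨hFne, k₁, hk₁, hvk₁, hmin₁⟩ :=
      hvN.val_sum ⟨k₀, hk₀s'⟩ (fun k hk => (hgv' k hk).1) (by
        intro k hk k' hk' hvv
        rw [(hgv' k hk).2, (hgv' k' hk').2] at hvv
        exact hfin k k' ⟨vK (c k') - vK (c k), by linarith⟩)
    rw [← hmap'] at hFne hvk₁
    refine ⟨hFne, ?_⟩
    rw [hvk₁, (hgv' k₁ hk₁).2, hvk₀, (hgv k₀ hk₀).2]
    have hle1 : (p : ℤ) * vK (c k₀) + ((k₀ : ℕ) : ℤ)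
        ≤ (p : ℤ) * vK (c k₁) + ((k₁ : ℕ) : ℤ) := by
      have h := hmin₀ k₁ (Finset.mem_filter.mp hk₁).1
      rw [(hgv k₀ hk₀).2, (hgv k₁ (Finset.mem_filter.mp hk₁).1).2] at h
      exact h
    have hle2 : (p : ℤ) * vK (c k₁) + ((k₁ : ℕ) : ℤ) + b
        ≤ (p : ℤ) * vK (c k₀) + ((k₀ : ℕ) : ℤ) + b := by
      have h := hmin₁ k₀ hk₀s'
      rw [(hgv' k₁ hk₁).2, (hgv' k₀ hk₀s').2] at h
      exact h
    omega
  -- iterates of y ↦ σ₀ y - y applied to ρ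
  set f : N → N := fun y => σ₀ y - y with hf
  have hD : ∀ j : ℕ, j ≤ p - 1 → (f^[j] ρ ≠ 0 ∧ vN (f^[j] ρ) = vN ρ + (j : ℤ) * b) := by
    intro j
    induction j with
    | zero => intro _; exact ⟨by simpa using hρ0, by simp⟩
    | succ j ih =>
      intro hj
      obtain ⟨h0, hvj⟩ := ih (by omega)
      have hnd : ¬ (p : ℤ) ∣ vN (f^[j] ρ) := by
        rw [hvj]
        intro hdvd
        have h1 : (p : ℤ) ∣ b - vN ρ := Int.ModEq.dvd hρ
        have h2 : (p : ℤ) ∣ ((j : ℤ) + 1) * b := by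
          have he : ((j : ℤ) + 1) * b = (vN ρ + (j : ℤ) * b) + (b - vN ρ) := by ring
          rw [he]; exact dvd_add hdvd h1
        rcases hpZ.dvd_mul.mp h2 with h3 | h3
        · have h4 : (p : ℤ) ∣ ((j + 1 : ℕ) : ℤ) := by push_cast; exact h3
          have h5 : p ∣ (j + 1) := by exact_mod_cast h4
          have := Nat.le_of_dvd (by omega) h5
          omega
        · exact hpb h3
      obtain ⟨h1, h2⟩ := hKL _ h0 hnd
      rw [Function.iterate_succ_apply']
      refine ⟨h1, ?_⟩
      show vN (σ₀ (f^[j] ρ) - f^[j] ρ) = _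
      rw [h2, hvj]
      push_cast
      ring
  -- linear independence of the iterates
  have hliD : LinearIndependent K (fun k : Fin p => f^[(k : ℕ)] ρ) := by
    rw [Fintype.linearIndependent_iff]
    intro a ha
    by_contra hcon
    push_neg at hcon
    obtain ⟨j, hj⟩ := hcon
    set sD : Finset (Fin p) := Finset.univ.filter (fun k => a k ≠ 0) with hsD
    have hjs : j ∈ sD := by simp [hsD, hj]
    have hsum : ∑ k ∈ sD, a k • f^[(k : ℕ)] ρ = 0 := by
      rw [← ha]
      exact Finset.sum_filter_of_ne (fun k _ hk h => hk (by rw [h, zero_smul]))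
    have hDk : ∀ k : Fin p, (f^[(k : ℕ)] ρ ≠ 0 ∧
        vN (f^[(k : ℕ)] ρ) = vN ρ + ((k : ℕ) : ℤ) * b) :=
      fun k => hD (k : ℕ) (by have := k.isLt; omega)
    have h0 : ∀ k ∈ sD, a k • f^[(k : ℕ)] ρ ≠ 0 := fun k hk =>
      (hsmul (a k) (Finset.mem_filter.mp hk).2 _ (hDk k).1).1
    have hd : ∀ k ∈ sD, ∀ k' ∈ sD,
        vN (a k • f^[(k : ℕ)] ρ) = vN (a k' • f^[(k' : ℕ)] ρ) → k = k' := by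
      intro k hk k' hk' hvv
      rw [(hsmul (a k) (Finset.mem_filter.mp hk).2 _ (hDk k).1).2, (hDk k).2,
        (hsmul (a k') (Finset.mem_filter.mp hk').2 _ (hDk k').1).2, (hDk k').2] at hvv
      refine hfin k k' ?_
      have hdvd : (p : ℤ) ∣ (((k : ℕ) : ℤ) - ((k' : ℕ) : ℤ)) * b :=
        ⟨vK (a k') - vK (a k), by ring_nf; ring_nf at hvv; linarith⟩
      exact (hpZ.dvd_mul.mp hdvd).resolve_right hpb
    obtain ⟨hne, -⟩ := hvN.val_sum ⟨j, hjs⟩ h0 hd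
    exact hne hsum
  -- the span of the conjugates of ρ contains all iterates
  set S : Set N := Set.range (fun τ : N ≃ₐ[K] N => τ ρ) with hS
  have hmapS : ∀ y, y ∈ Submodule.span K S → σ₀ y ∈ Submodule.span K S := by
    intro y hy
    induction hy using Submodule.span_induction with
    | mem z hz =>
      obtain ⟨τ, rfl⟩ := hz
      exact Submodule.subset_span ⟨σ₀ * τ, rfl⟩
    | zero => rw [map_zero]; exact Submodule.zero_mem _
    | add x y hx hy ihx ihy => rw [map_add]; exact add_mem ihx ihy
    | smul a x hx ihx => rw [Algebra.smul_def, map_mul, AlgEquiv.commutes, ← Algebra.smul_def]; exact Submodule.smul_mem _ a ihx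
  have hDspan : ∀ j : ℕ, f^[j] ρ ∈ Submodule.span K S := by
    intro j
    induction j with
    | zero => exact Submodule.subset_span ⟨1, by simp⟩
    | succ j ih =>
      rw [Function.iterate_succ_apply']
      show σ₀ (f^[j] ρ) - f^[j] ρ ∈ Submodule.span K S
      exact sub_mem (hmapS _ ih) ih
  set γ : Module.Basis (Fin p) K N := basisOfLinearIndependentOfCardEqFinrank hliD hcardfin with hγ
  have hγspan : Submodule.span K (Set.range (fun k : Fin p => f^[(k : ℕ)] ρ)) = ⊤ := by
    have h := γ.span_eq
    rwa [hγ, coe_basisOfLinearIndependentOfCardEqFinrank] at h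
  have htop : ⊤ ≤ Submodule.span K S := by
    rw [← hγspan]
    refine Submodule.span_le.mpr ?_
    rintro y ⟨k, rfl⟩
    exact hDspan (k : ℕ)
  have hcardG : Fintype.card (N ≃ₐ[K] N) = Module.finrank K N :=
    by rw [← Nat.card_eq_fintype_card]; exact IsGalois.card_aut_eq_finrank K N
  refine ⟨basisOfTopLeSpanOfCardEqFinrank (fun τ : N ≃ₐ[K] N => τ ρ) htop hcardG, ?_⟩
  intro τ
  exact congrFun (coe_basisOfTopLeSpanOfCardEqFinrank _ htop hcardG) τ
end

section
/- Let K be a finite extension of ℚ_p and let N/K be a fully ramified cyclic extension of degree p with unique ramification break b, where p ∤ b. Then for every α ∈ K there exists ρ ∈ N with v_N(ρ) = v_N(α) − (p−1)b and Tr_{N/K}(ρ) = α. -/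
section AuxVal

variable {F : Type*} [Field F] {v : F → ℤ}

lemma IsNormDiscreteVal.one' (hv : IsNormDiscreteVal v) : v 1 = 0 := by
  have := hv.map_mul (one_ne_zero (α := F)) one_ne_zero
  simp only [one_mul] at this; omega

lemma IsNormDiscreteVal.neg' (hv : IsNormDiscreteVal v) {x : F} (hx : x ≠ 0) :
    v (-x) = v x := by
  have h1 : v ((-1 : F) * (-1)) = v (-1 : F) + v (-1 : F) :=
    hv.map_mul (by norm_num) (by norm_num)
  rw [neg_mul_neg, one_mul, hv.one'] at h1
  have h2 : v ((-1 : F) * x) = v (-1 : F) + v x := hv.map_mul (by norm_num) hx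
  rw [neg_mul, one_mul] at h2
  omega

lemma IsNormDiscreteVal.inv' (hv : IsNormDiscreteVal v) {x : F} (hx : x ≠ 0) :
    v x⁻¹ = - v x := by
  have := hv.map_mul hx (inv_ne_zero hx)
  rw [mul_inv_cancel₀ hx, hv.one'] at this; omega

lemma IsNormDiscreteVal.prod' (hv : IsNormDiscreteVal v) {ι : Type*} (s : Finset ι) (f : ι → F)
    (h : ∀ a ∈ s, f a ≠ 0) : v (∏ a ∈ s, f a) = ∑ a ∈ s, v (f a) := by
  classical
  induction s using Finset.cons_induction with
  | empty => simpa using hv.one'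
  | cons a s ha ih =>
    rw [Finset.prod_cons, Finset.sum_cons,
      hv.map_mul (h a (Finset.mem_cons_self a s))
        (Finset.prod_ne_zero_iff.2 fun b hb => h b (Finset.mem_cons_of_mem hb)),
      ih (fun b hb => h b (Finset.mem_cons_of_mem hb))]

lemma IsNormDiscreteVal.pow' (hv : IsNormDiscreteVal v) {x : F} (hx : x ≠ 0) (n : ℕ) :
    v (x ^ n) = n * v x := by
  induction n with
  | zero => simpa using hv.one'
  | succ n ih =>
    rw [pow_succ, hv.map_mul (pow_ne_zero n hx) hx, ih]
    push_cast; ring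

end AuxVal

open Polynomial IntermediateField

/-- **Lemma 2, base case (converse).** Let `N/K` be a fully ramified cyclic extension of
degree `p` with unique ramification break `b`, where `p ∤ b`.  Then for every `α ∈ K`
there is `ρ ∈ N` with `v_N(ρ) = v_N(α) − (p−1)·b` and `Tr_{N/K}(ρ) = α`. -/
theorem exists_trace_preimage_degree_p
    (p : ℕ) [Fact p.Prime]
    (K N : Type*) [Field K] [Field N]
    [Algebra ℚ_[p] K] [FiniteDimensional ℚ_[p] K]
    [Algebra K N] [IsGalois K N]
    (hdeg : Module.finrank K N = p)
    (vK : K → ℤ) (hvK : IsNormDiscreteVal vK)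
    (vN : N → ℤ) (hvN : IsNormDiscreteVal vN)
    (hfull : ∀ x : K, x ≠ 0 → vN (algebraMap K N x) = (p : ℤ) * vK x)
    (πN : N) (hπN0 : πN ≠ 0) (hπN1 : vN πN = 1)
    (b : ℤ)
    (hb : ∀ i : ℤ, ramSet K N vN πN (i + 1) ⊂ ramSet K N vN πN i ↔ i = b)
    (hpb : ¬ (p : ℤ) ∣ b) :
    ∀ α : K, α ≠ 0 →
      ∃ ρ : N, ρ ≠ 0 ∧
        vN ρ = vN (algebraMap K N α) - ((p : ℤ) - 1) * b ∧
        Algebra.trace K N ρ = α := by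
  classical
  intro α hα
  have hp : p.Prime := Fact.out
  haveI hfd : FiniteDimensional K N :=
    FiniteDimensional.of_finrank_pos (by rw [hdeg]; exact hp.pos)
  haveI : CharZero K := charZero_of_injective_algebraMap (algebraMap ℚ_[p] K).injective
  haveI : Algebra.IsSeparable K N := inferInstance
  -- `πN` is not in the image of `K`
  have hnr : ∀ x : K, algebraMap K N x ≠ πN := by
    intro x hx
    have hx0 : x ≠ 0 := by
      rintro rfl; rw [map_zero] at hx; exact hπN0 hx.symm
    have h1 : vN (algebraMap K N x) = (p : ℤ) * vK x := hfull x hx0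
    rw [hx, hπN1] at h1
    have : (p : ℤ) ∣ 1 := ⟨vK x, h1⟩
    have := Int.le_of_dvd one_pos this
    have := hp.two_le
    omega
  have hint : IsIntegral K πN := Algebra.IsIntegral.isIntegral πN
  -- adjoin πN is everything
  have hfinF : Module.finrank K K⟮πN⟯ = p := by
    have hmul : Module.finrank K K⟮πN⟯ * Module.finrank K⟮πN⟯ N = p := by
      rw [Module.finrank_mul_finrank, hdeg]
    have hdvd : Module.finrank K K⟮πN⟯ ∣ p := ⟨_, hmul.symm⟩
    rcases hp.eq_one_or_self_of_dvd _ hdvd with h | h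
    · exfalso
      have hbot := IntermediateField.finrank_eq_one_iff.mp h
      have : πN ∈ (⊥ : IntermediateField K N) := by
        rw [← hbot]; exact IntermediateField.mem_adjoin_simple_self K πN
      rcases IntermediateField.mem_bot.mp this with ⟨x, hx⟩
      exact hnr x hx
    · exact h
  have htop : K⟮πN⟯ = ⊤ :=
    IntermediateField.eq_of_le_of_finrank_eq le_top
      (by rw [hfinF, IntermediateField.finrank_top', hdeg])
  have hndeg : (minpoly K πN).natDegree = p := by
    rw [← IntermediateField.adjoin.finrank hint, hfinF]
  -- automorphisms fixing πN are trivial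
  have hfix : ∀ σ : N ≃ₐ[K] N, σ πN = πN → σ = 1 := by
    intro σ hσ
    have hadj : Algebra.adjoin K {πN} = ⊤ := by
      rw [← IntermediateField.adjoin_simple_toSubalgebra_of_isAlgebraic hint.isAlgebraic, htop,
        IntermediateField.top_toSubalgebra]
    have : (σ : N →ₐ[K] N) = (1 : N ≃ₐ[K] N) := by
      apply AlgHom.ext_of_adjoin_eq_top hadj
      rintro x rfl
      simpa using hσ
    exact AlgEquiv.coe_algHom_injective this
  have hinj : Function.Injective (fun σ : N ≃ₐ[K] N => σ πN) := by
    intro σ τ h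
    have h1 : (σ.trans τ.symm) πN = πN := by
      simp only [AlgEquiv.trans_apply, h]
      exact τ.symm_apply_apply πN
    have h2 := hfix _ h1
    ext x
    have := congrArg (fun (μ : N ≃ₐ[K] N) => τ (μ x)) h2
    simpa using this
  -- the ramification break
  have hbreak : ∀ σ : N ≃ₐ[K] N, σ πN ≠ πN → vN (σ πN - πN) = b + 1 := by
    intro σ hσ
    set c := vN (σ πN - πN) with hc
    have hmono : ∀ i j : ℤ, i ≤ j → ramSet K N vN πN j ⊆ ramSet K N vN πN i := by
      intro i j hij τ hτ
      rcases hτ with h | h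
      · exact Or.inl h
      · exact Or.inr (le_trans (by omega) h)
    have hss : ramSet K N vN πN ((c - 1) + 1) ⊂ ramSet K N vN πN (c - 1) := by
      constructor
      · exact hmono _ _ (by omega)
      · intro hsub
        have hσmem : σ ∈ ramSet K N vN πN (c - 1) := Or.inr (by omega)
        rcases hsub hσmem with h | h
        · exact hσ h
        · omega
    have := (hb (c - 1)).mp hss
    omega
  -- the Galois group has `p` elements
  have hcard : Fintype.card (N ≃ₐ[K] N) = p := by
    rw [← Nat.card_eq_fintype_card, IsGalois.card_aut_eq_finrank, hdeg]
  -- the set of conjugates of πN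
  set T : Finset N := Finset.univ.image (fun σ : N ≃ₐ[K] N => σ πN) with hT
  have hTcard : T.card = p := by
    rw [hT, Finset.card_image_of_injective _ hinj, Finset.card_univ, hcard]
  have hπT : πN ∈ T := by
    rw [hT]
    exact Finset.mem_image.mpr ⟨1, Finset.mem_univ _, rfl⟩
  -- the minimal polynomial mapped to N
  set fm : N[X] := (minpoly K πN).map (algebraMap K N) with hfm
  have hfm_monic : fm.Monic := (minpoly.monic hint).map _
  have hfm0 : fm ≠ 0 := hfm_monic.ne_zero
  have hsp : fm.Splits := by
    rw [hfm]
    exact Normal.splits inferInstance πN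
  have hfmdeg : fm.natDegree = p := by rw [hfm, natDegree_map, hndeg]
  have hroots_card : fm.roots.card = p := by
    rw [splits_iff_card_roots.mp hsp, hfmdeg]
  have hTroots : T.val ≤ fm.roots := by
    rw [Multiset.le_iff_count]
    intro a
    by_cases ha : a ∈ T
    · rw [Multiset.count_eq_one_of_mem T.nodup ha]
      refine Multiset.one_le_count_iff_mem.mpr ?_
      rw [Polynomial.mem_roots']
      refine ⟨hfm0, ?_⟩
      rcases Finset.mem_image.mp ha with ⟨σ, -, rfl⟩
      have : (Polynomial.aeval (σ πN)) (minpoly K πN) = 0 := by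
        rw [show σ πN = (σ : N →ₐ[K] N) πN from rfl, Polynomial.aeval_algHom_apply,
          minpoly.aeval, map_zero]
      rwa [Polynomial.IsRoot, hfm, Polynomial.eval_map, ← Polynomial.aeval_def]
    · rw [Multiset.count_eq_zero_of_notMem (by simpa using ha)]
      exact Nat.zero_le _
  have hroots_eq : fm.roots = T.val := by
    refine (Multiset.eq_of_le_of_card_le hTroots ?_).symm
    rw [hroots_card, ← hTcard]
    rfl
  have hprod : fm = (fm.roots.map fun a => X - C a).prod :=
    hsp.eq_prod_roots_of_monic hfm_monic
  -- the derivative evaluated at πN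
  set D : N := Polynomial.aeval πN (derivative (minpoly K πN)) with hDdef
  have hDeval : D = ∏ a ∈ T.erase πN, (πN - a) := by
    have h1 : D = Polynomial.eval πN (derivative fm) := by
      rw [hDdef, hfm, Polynomial.derivative_map, Polynomial.eval_map, Polynomial.aeval_def]
    rw [h1]
    conv_lhs => rw [hprod, hroots_eq]
    rw [Polynomial.eval_multiset_prod_X_sub_C_derivative (by exact hπT)]
    rw [← Finset.erase_val]
    rfl
  have hfac0 : ∀ a ∈ T.erase πN, πN - a ≠ 0 := by
    intro a ha
    have := Finset.ne_of_mem_erase ha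
    exact sub_ne_zero.mpr (Ne.symm this)
  have hD0 : D ≠ 0 := by
    rw [hDeval]
    exact Finset.prod_ne_zero_iff.2 hfac0
  have hvD : vN D = ((p : ℤ) - 1) * (b + 1) := by
    rw [hDeval, hvN.prod' _ _ hfac0]
    have hval : ∀ a ∈ T.erase πN, vN (πN - a) = b + 1 := by
      intro a ha
      have haT : a ∈ T := Finset.mem_of_mem_erase ha
      have hane : a ≠ πN := Finset.ne_of_mem_erase ha
      rcases Finset.mem_image.mp haT with ⟨σ, -, rfl⟩
      have hσ : σ πN ≠ πN := hane
      have : πN - σ πN = -(σ πN - πN) := by ring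
      rw [this, hvN.neg' (sub_ne_zero.mpr hσ), hbreak σ hσ]
    rw [Finset.sum_congr rfl hval, Finset.sum_const, Finset.card_erase_of_mem hπT, hTcard,
      nsmul_eq_mul, Nat.cast_sub hp.one_le]
    push_cast
    ring
  -- the power basis generated by πN
  set pb : PowerBasis K N :=
    (IntermediateField.adjoin.powerBasis hint).map
      ((IntermediateField.equivOfEq htop).trans IntermediateField.topEquiv) with hpb
  have hpbgen : pb.gen = πN := rfl
  have hpbdim : pb.dim = p := hndeg
  -- Euler's identity : trace (πN ^ (p - 1) / f'(πN)) = 1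
  set θ : N := πN ^ (p - 1) / D with hθ
  have hθ0 : θ ≠ 0 := div_ne_zero (pow_ne_zero _ hπN0) hD0
  have htrθ : Algebra.trace K N θ = 1 := by
    have hlt : p - 1 < pb.dim := by have h2 := hp.two_le; rw [hpbdim]; omega
    have key := (Algebra.traceForm K N).apply_dualBasis_left
      (traceForm_nondegenerate K N) pb.basis ⟨p - 1, hlt⟩ ⟨p - 1, hlt⟩
    rw [show (Algebra.traceForm K N).dualBasis (traceForm_nondegenerate K N) pb.basis = pb.basis.traceDual from rfl,
      Module.Basis.traceDual_powerBasis_eq pb ⟨p - 1, hlt⟩] at key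
    simp only [if_pos rfl] at key
    have hcoeff : (minpolyDiv K pb.gen).coeff ((⟨p - 1, hlt⟩ : Fin pb.dim) : ℕ) = 1 := by
      have h1 : (minpolyDiv K pb.gen).natDegree = p - 1 := by
        rw [natDegree_minpolyDiv, hpbgen, hndeg]
      show (minpolyDiv K pb.gen).coeff (p - 1) = 1
      rw [← h1]
      exact (minpolyDiv_monic (by rw [hpbgen]; exact hint)).coeff_natDegree
    rw [hcoeff] at key
    rw [Algebra.traceForm_apply, pb.basis_eq_pow] at key
    have h3 : 1 / Polynomial.aeval pb.gen (derivative (minpoly K pb.gen))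
        * pb.gen ^ ((⟨p - 1, hlt⟩ : Fin pb.dim) : ℕ) = θ := by
      rw [hpbgen, ← hDdef, hθ]
      show (1 : N) / D * πN ^ (p - 1) = πN ^ (p - 1) / D
      field_simp
    rwa [h3] at key
  -- assemble
  refine ⟨algebraMap K N α * θ, ?_, ?_, ?_⟩
  · exact mul_ne_zero ((map_ne_zero_iff _ (algebraMap K N).injective).mpr hα) hθ0
  · have halg0 : algebraMap K N α ≠ 0 := (map_ne_zero_iff _ (algebraMap K N).injective).mpr hα
    rw [hvN.map_mul halg0 hθ0, hθ, div_eq_mul_inv,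
      hvN.map_mul (pow_ne_zero _ hπN0) (inv_ne_zero hD0), hvN.pow' hπN0, hvN.inv' hD0, hvD,
      hπN1, Nat.cast_sub hp.one_le]
    push_cast
    ring
  · have : algebraMap K N α * θ = α • θ := (Algebra.smul_def α θ).symm
    rw [this, map_smul, htrθ, smul_eq_mul, mul_one]
end
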